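/- Let ρ be a 2×2 density matrix and let A, B be 2×2 Hermitian matrices with Tr A = Tr B = 0 and A² = B² = I, with orthonormal eigenbases {|a_1⟩, |a_2⟩} and {|b_1⟩, |b_2⟩} respectively. Let c_ab = max_{j,k} |⟨a_j|b_k⟩|, let ΔA², ΔB² be the variances of A and B in state ρ, and set a_± = (1 ± √(1 − ΔA²))/2 and b_± = (1 ± √(1 − ΔB²))/2. Then, with the convention 0⁰ = 1, a_+^{a_+} · a_-^{a_-} · b_+^{b_+} · b_-^{b_-} ≤ c_ab². -/

import Mathlib

open Matrix ComplexOrder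

namespace QMU

open Real

/-! ### Scalar analysis lemmas -/

private lemma hd_add (x : ℝ) (hx' : (0:ℝ) < 1 + x) :
    HasDerivAt (fun y : ℝ => (y - y^2/2 + y^3/3 - y^4/4 + y^5/5) - Real.log (1+y))
      ((1 - x + x^2 - x^3 + x^4) - 1/(1+x)) x := by
  have hlog : HasDerivAt (fun y : ℝ => Real.log (1+y)) (1/(1+x)) x := by
    simpa [Function.comp_def] using ((Real.hasDerivAt_log hx'.ne').comp x (((hasDerivAt_id x).const_add 1)))
  have hp : HasDerivAt (fun y : ℝ => y - y^2/2 + y^3/3 - y^4/4 + y^5/5)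
      (1 - x + x^2 - x^3 + x^4) x := by
    have := (((((hasDerivAt_id x).sub ((hasDerivAt_pow 2 x).div_const 2)).add
      ((hasDerivAt_pow 3 x).div_const 3)).sub ((hasDerivAt_pow 4 x).div_const 4)).add
      ((hasDerivAt_pow 5 x).div_const 5))
    refine this.congr_deriv ?_
    push_cast; ring
  exact hp.sub hlog

/-- `log (1+t) ≤ t - t²/2 + t³/3 - t⁴/4 + t⁵/5` for `t ≥ 0`. -/
lemma log_one_add_le_poly {t : ℝ} (ht : 0 ≤ t) :
    Real.log (1+t) ≤ t - t^2/2 + t^3/3 - t^4/4 + t^5/5 := by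
  have key : MonotoneOn (fun y : ℝ => (y - y^2/2 + y^3/3 - y^4/4 + y^5/5) - Real.log (1+y))
      (Set.Ici 0) := by
    apply monotoneOn_of_deriv_nonneg (convex_Ici 0)
    · intro x hx
      have hx' : (0:ℝ) < 1 + x := by simp at hx; linarith
      exact ((hd_add x hx').continuousAt).continuousWithinAt
    · intro x hx
      rw [interior_Ici] at hx
      have hx' : (0:ℝ) < 1 + x := by have : (0:ℝ) < x := hx; linarith
      exact ((hd_add x hx').differentiableAt).differentiableWithinAt
    · intro x hx
      rw [interior_Ici] at hx
      have hx0 : (0:ℝ) < x := hx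
      have hx' : (0:ℝ) < 1 + x := by linarith
      rw [(hd_add x hx').deriv]
      have h1 : 1/(1+x) ≤ 1 - x + x^2 - x^3 + x^4 := by
        rw [div_le_iff₀ hx']
        nlinarith [pow_nonneg hx0.le 5]
      linarith
  have := key (Set.self_mem_Ici) (Set.mem_Ici.2 ht) ht
  simp only [Real.log_one] at this
  norm_num at this
  linarith

private lemma hd_sub (x : ℝ) (hx' : (0:ℝ) < 1 - x) :
    HasDerivAt (fun y : ℝ => (-(y + y^2/2 + y^3/3 + y^4/4 + y^5/5)) - Real.log (1-y))
      ((-(1 + x + x^2 + x^3 + x^4)) - (-(1/(1-x)))) x := by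
  have hlog : HasDerivAt (fun y : ℝ => Real.log (1-y)) (-(1/(1-x))) x := by
    have := (Real.hasDerivAt_log hx'.ne').comp x ((hasDerivAt_id x).const_sub 1)
    simpa [div_eq_mul_inv, Function.comp_def] using this
  have hp : HasDerivAt (fun y : ℝ => -(y + y^2/2 + y^3/3 + y^4/4 + y^5/5))
      (-(1 + x + x^2 + x^3 + x^4)) x := by
    have := (((((hasDerivAt_id x).add ((hasDerivAt_pow 2 x).div_const 2)).add
      ((hasDerivAt_pow 3 x).div_const 3)).add ((hasDerivAt_pow 4 x).div_const 4)).add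
      ((hasDerivAt_pow 5 x).div_const 5)).neg
    refine this.congr_deriv ?_
    push_cast; ring
  exact hp.sub hlog

/-- `log (1-t) ≤ -(t + t²/2 + t³/3 + t⁴/4 + t⁵/5)` for `0 ≤ t < 1`. -/
lemma log_one_sub_le_poly {t : ℝ} (ht : 0 ≤ t) (ht1 : t < 1) :
    Real.log (1-t) ≤ -(t + t^2/2 + t^3/3 + t^4/4 + t^5/5) := by
  have key : MonotoneOn (fun y : ℝ => (-(y + y^2/2 + y^3/3 + y^4/4 + y^5/5)) - Real.log (1-y))
      (Set.Ico 0 1) := by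
    apply monotoneOn_of_deriv_nonneg (convex_Ico 0 1)
    · intro x hx
      have hx' : (0:ℝ) < 1 - x := by have := hx.2; simp at this ⊢; linarith
      exact ((hd_sub x hx').continuousAt).continuousWithinAt
    · intro x hx
      rw [interior_Ico] at hx
      have hx' : (0:ℝ) < 1 - x := by have := hx.2; linarith
      exact ((hd_sub x hx').differentiableAt).differentiableWithinAt
    · intro x hx
      rw [interior_Ico] at hx
      obtain ⟨hx0, hx1⟩ := hx
      have hx' : (0:ℝ) < 1 - x := by linarith
      rw [(hd_sub x hx').deriv]
      have h1 : 1 + x + x^2 + x^3 + x^4 ≤ 1/(1-x) := by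
        rw [le_div_iff₀ hx']
        nlinarith [pow_nonneg hx0.le 5]
      linarith
  have := key (by constructor <;> norm_num) (Set.mem_Ico.2 ⟨ht, ht1⟩) ht
  simp only [Real.log_one] at this
  norm_num at this
  linarith

/-- `1 - 1/y ≤ log y` for `y > 0`. -/
private lemma one_sub_inv_le_log {y : ℝ} (hy : 0 < y) : 1 - 1/y ≤ Real.log y := by
  have := Real.log_le_sub_one_of_pos (show (0:ℝ) < 1/y by positivity)
  rw [Real.log_div one_ne_zero hy.ne', Real.log_one] at this
  linarith

private lemma hd_g (x : ℝ) (hx' : (0:ℝ) < 1 + x) :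
    HasDerivAt (fun y : ℝ =>
        2*Real.log 2*y^2 + (y - y^2/2 - y^3/6 - y^4/3) - (1+y)*Real.log (1+y))
      (4*Real.log 2*x - x - x^2/2 - 4*x^3/3 - Real.log (1+x)) x := by
  have hlog : HasDerivAt (fun y : ℝ => Real.log (1+y)) (1/(1+x)) x := by
    simpa [Function.comp_def] using ((Real.hasDerivAt_log hx'.ne').comp x (((hasDerivAt_id x).const_add 1)))
  have h1 : HasDerivAt (fun y : ℝ => (1+y)*Real.log (1+y))
      (Real.log (1+x) + 1) x := by
    have := (((hasDerivAt_id x).const_add 1).mul hlog)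
    refine this.congr_deriv ?_
    field_simp
    simp only [id]; ring
  have h2 : HasDerivAt (fun y : ℝ => 2*Real.log 2*y^2 + (y - y^2/2 - y^3/6 - y^4/3))
      (2*Real.log 2*(2*x) + (1 - x - x^2/2 - 4*x^3/3)) x := by
    have := (((hasDerivAt_pow 2 x).const_mul (2*Real.log 2)).add
      ((((hasDerivAt_id x).sub ((hasDerivAt_pow 2 x).div_const 2)).sub
        ((hasDerivAt_pow 3 x).div_const 6)).sub ((hasDerivAt_pow 4 x).div_const 3)))
    refine this.congr_deriv ?_
    push_cast; ring
  have := h2.sub h1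
  refine this.congr_deriv ?_
  ring

/-- Key region-2 lemma: `(1+t)log(1+t) ≤ 2 log 2 t² + (t - t²/2 - t³/6 - t⁴/3)` on `[3/4,1]`. -/
private lemma region2_g {t : ℝ} (h0 : 3/4 ≤ t) (h1 : t ≤ 1) :
    0 ≤ 2*Real.log 2*t^2 + (t - t^2/2 - t^3/6 - t^4/3) - (1+t)*Real.log (1+t) := by
  have key : AntitoneOn (fun y : ℝ =>
      2*Real.log 2*y^2 + (y - y^2/2 - y^3/6 - y^4/3) - (1+y)*Real.log (1+y))
      (Set.Icc (3/4 : ℝ) 1) := by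
    apply antitoneOn_of_deriv_nonpos (convex_Icc _ _)
    · intro x hx
      have hx' : (0:ℝ) < 1 + x := by have := hx.1; simp at this ⊢; linarith
      exact ((hd_g x hx').continuousAt).continuousWithinAt
    · intro x hx
      rw [interior_Icc] at hx
      have hx' : (0:ℝ) < 1 + x := by have := hx.1; linarith
      exact ((hd_g x hx').differentiableAt).differentiableWithinAt
    · intro x hx
      rw [interior_Icc] at hx
      obtain ⟨hx0, hx1⟩ := hx
      have hx' : (0:ℝ) < 1 + x := by linarith
      rw [(hd_g x hx').deriv]
      have hlow : Real.log 2 + 1 - 2/(1+x) ≤ Real.log (1+x) := by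
        have h2 : (0:ℝ) < (1+x)/2 := by linarith
        have := one_sub_inv_le_log h2
        rw [Real.log_div hx'.ne' two_ne_zero] at this
        have e : 1/((1+x)/2) = 2/(1+x) := by field_simp
        rw [e] at this
        linarith
      have hLu : Real.log 2 < 0.6931471808 := Real.log_two_lt_d9
      have hLl : (0.6931471803:ℝ) < Real.log 2 := Real.log_two_gt_d9
      have hu : 2/(1+x) * (1+x) = 2 := by field_simp
      have hupos : (0:ℝ) < 2/(1+x) := by positivity
      nlinarith [mul_pos (sub_pos.2 hx0) (sub_pos.2 hx1), sq_nonneg (x - 3/4),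
        mul_nonneg (sub_nonneg.2 hx0.le) (sub_nonneg.2 hx1.le)]
  have e1 : (fun y : ℝ =>
      2*Real.log 2*y^2 + (y - y^2/2 - y^3/6 - y^4/3) - (1+y)*Real.log (1+y)) 1 = 0 := by
    have : Real.log (1+(1:ℝ)) = Real.log 2 := by norm_num
    simp only [this]
    ring
  have := key (Set.mem_Icc.2 ⟨h0, le_trans h1 le_rfl⟩) (Set.mem_Icc.2 ⟨by norm_num, le_rfl⟩) h1
  rw [e1] at this
  simpa using this

/-- `(1-t) log (1-t) ≤ -(1-t)(t + t²/2 + t³/3)` for `t ∈ [0,1]` (incl. `t = 1`). -/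
private lemma one_sub_mul_log_le {t : ℝ} (h0 : 0 ≤ t) (h1 : t ≤ 1) :
    (1-t)*Real.log (1-t) ≤ -((1-t)*(t + t^2/2 + t^3/3)) := by
  rcases eq_or_lt_of_le h1 with rfl | hlt
  · norm_num
  · have hb := log_one_sub_le_poly h0 hlt
    have h1t : (0:ℝ) ≤ 1 - t := by linarith
    have := mul_le_mul_of_nonneg_left hb h1t
    have h5 : (0:ℝ) ≤ t^4/4 + t^5/5 := by positivity
    nlinarith [mul_nonneg h1t h5]

/-- Core entropy inequality: `(1+t)log(1+t) + (1-t)log(1-t) ≤ 2 log 2 · t²` on `[0,1]`. -/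
lemma core_entropy {t : ℝ} (h0 : 0 ≤ t) (h1 : t ≤ 1) :
    (1+t)*Real.log (1+t) + (1-t)*Real.log (1-t) ≤ 2*Real.log 2*t^2 := by
  rcases le_or_gt t (3/4) with hc | hc
  · -- region 1
    have hlt : t < 1 := by linarith
    have ha := log_one_add_le_poly h0
    have hb := log_one_sub_le_poly h0 hlt
    have h1p : (0:ℝ) ≤ 1 + t := by linarith
    have h1m : (0:ℝ) ≤ 1 - t := by linarith
    have hA := mul_le_mul_of_nonneg_left ha h1p
    have hB := mul_le_mul_of_nonneg_left hb h1m
    have hL : (0.6931471803:ℝ) < Real.log 2 := Real.log_two_gt_d9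
    nlinarith [sq_nonneg t, sq_nonneg (t*t), sq_nonneg (t*t*t), pow_nonneg h0 2,
      pow_nonneg h0 4, pow_nonneg h0 6, mul_le_mul_of_nonneg_right (sq_le_sq' (by linarith) hc) (pow_nonneg h0 2)]
  · -- region 2
    have hg := region2_g hc.le h1
    have hB := one_sub_mul_log_le h0 h1
    nlinarith [hg, hB]

/-- chord bound : `exp ((s-1) log 2) ≤ (1+s)/2` on `[0,1]`. -/
lemma chord_exp {s : ℝ} (h0 : 0 ≤ s) (h1 : s ≤ 1) :
    Real.exp ((s-1)*Real.log 2) ≤ (1+s)/2 := by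
  have key : Real.exp (s*Real.log 2) ≤ 1 + s := by
    have hc := convexOn_exp.2 (Set.mem_univ (0:ℝ)) (Set.mem_univ (Real.log 2))
      (by linarith : (0:ℝ) ≤ 1 - s) h0 (by ring)
    simp only [smul_eq_mul, mul_zero, zero_add, Real.exp_zero, mul_one,
      Real.exp_log two_pos] at hc
    calc Real.exp (s*Real.log 2) = Real.exp ((1-s)*0 + s*Real.log 2) := by ring_nf
    _ ≤ (1-s)*1 + s*2 := by simpa using hc
    _ = 1 + s := by ring
  have : Real.exp ((s-1)*Real.log 2) = Real.exp (s*Real.log 2) / 2 := by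
    rw [show (s-1)*Real.log 2 = s*Real.log 2 + (-Real.log 2) by ring, Real.exp_add,
      Real.exp_neg, Real.exp_log two_pos]
    ring
  rw [this]
  linarith

/-- rpow bridge: `p ^ p = exp (p log p)` for `p ≥ 0` (with conventions `0^0=1`, `log 0=0`). -/
lemma rpow_self_eq_exp {p : ℝ} (hp : 0 ≤ p) : p ^ p = Real.exp (p * Real.log p) := by
  rcases eq_or_lt_of_le hp with rfl | hp'
  · simp
  · rw [Real.rpow_def_of_pos hp']; ring_nf

/-- main scalar bound: `((1+m)/2)^((1+m)/2) ((1-m)/2)^((1-m)/2) ≤ exp((m²-1) log 2)`. -/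
lemma F_bound {m : ℝ} (h0 : 0 ≤ m) (h1 : m ≤ 1) :
    ((1+m)/2) ^ ((1+m)/2) * ((1-m)/2) ^ ((1-m)/2) ≤ Real.exp ((m^2-1)*Real.log 2) := by
  have hp : (0:ℝ) ≤ (1+m)/2 := by linarith
  have hq : (0:ℝ) ≤ (1-m)/2 := by linarith
  rw [rpow_self_eq_exp hp, rpow_self_eq_exp hq, ← Real.exp_add]
  apply Real.exp_le_exp.2
  -- p log p + q log q ≤ (m²-1) log 2
  have hplog : ((1+m)/2) * Real.log ((1+m)/2) = ((1+m)*Real.log (1+m) - (1+m)*Real.log 2)/2 := by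
    rw [Real.log_div (by linarith) two_ne_zero]
    ring
  have hqlog : ((1-m)/2) * Real.log ((1-m)/2) = ((1-m)*Real.log (1-m) - (1-m)*Real.log 2)/2 := by
    rcases eq_or_lt_of_le h1 with rfl | hlt
    · norm_num
    · rw [Real.log_div (by linarith) two_ne_zero]
      ring
  rw [hplog, hqlog]
  have := core_entropy h0 h1
  nlinarith [this]


/-! ### Matrix lemmas -/

local notation "M2" => Matrix (Fin 2) (Fin 2) ℂ

lemma vecMulVec_mulVec (u v x : Fin 2 → ℂ) :
    (vecMulVec u v) *ᵥ x = (v ⬝ᵥ x) • u := by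
  funext i
  simp [Matrix.mulVec, dotProduct, vecMulVec_apply, Fin.sum_univ_two]
  ring

lemma vecMulVec_mul_vecMulVec (u v x y : Fin 2 → ℂ) :
    (vecMulVec u v : M2) * vecMulVec x y = (v ⬝ᵥ x) • vecMulVec u y := by
  ext i j
  simp [Matrix.mul_apply, vecMulVec_apply, dotProduct, Fin.sum_univ_two,
    Matrix.smul_apply, smul_eq_mul]
  ring

lemma trace_vecMulVec (u v : Fin 2 → ℂ) : (vecMulVec u v : M2).trace = v ⬝ᵥ u := by
  simp [Matrix.trace, Matrix.diag, vecMulVec_apply, dotProduct, Fin.sum_univ_two]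
  ring

lemma conjTranspose_vecMulVec (u v : Fin 2 → ℂ) :
    (vecMulVec u (star v) : M2)ᴴ = vecMulVec v (star u) := by
  ext i j
  simp [Matrix.conjTranspose_apply, vecMulVec_apply, Pi.star_apply, mul_comm]

/-- completeness : two orthonormal vectors in ℂ² form a resolution of identity. -/
lemma completeness (a : Fin 2 → Fin 2 → ℂ)
    (ha : ∀ i j, star (a i) ⬝ᵥ a j = if i = j then 1 else 0) :
    vecMulVec (a 0) (star (a 0)) + vecMulVec (a 1) (star (a 1)) = (1 : M2) := by
  set M : M2 := Matrix.of (fun i j => star (a i j)) with hM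
  have h1 : M * Mᴴ = 1 := by
    ext i j
    have := ha i j
    simp only [dotProduct, Pi.star_apply, Fin.sum_univ_two, Complex.star_def] at this
    simp [hM, Matrix.mul_apply, Matrix.conjTranspose_apply, Fin.sum_univ_two,
      Matrix.one_apply]
    exact this
  have h2 : Mᴴ * M = 1 := mul_eq_one_comm.mp h1
  ext k l
  have := congrFun (congrFun h2 k) l
  simp only [hM, Matrix.mul_apply, Matrix.conjTranspose_apply, Matrix.of_apply,
    Fin.sum_univ_two, star_star] at this
  simp only [Matrix.add_apply, vecMulVec_apply, Pi.star_apply]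
  rw [← this]


/-- Cayley–Hamilton for 2×2. -/
lemma ch2 (M : M2) : M * M = M.trace • M - M.det • 1 := by
  ext i j
  fin_cases i <;> fin_cases j <;>
    simp [Matrix.mul_apply, Fin.sum_univ_two, Matrix.trace_fin_two, Matrix.det_fin_two,
      Matrix.one_apply, Matrix.smul_apply, smul_eq_mul] <;> ring

/-- trace of PSD matrix is nonneg (ComplexOrder). -/
lemma trace_nonneg_of_psd (M : M2) (hM : M.PosSemidef) : 0 ≤ M.trace := by
  have hdiag : ∀ i, 0 ≤ M i i := by
    intro i
    have := hM.dotProduct_mulVec_nonneg (Pi.single i 1)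
    simpa [Matrix.mulVec_single, dotProduct, Fin.sum_univ_two, Pi.single_apply,
      apply_ite] using this
  rw [Matrix.trace]
  exact Finset.sum_nonneg fun i _ => hdiag i

lemma trace_mul_nonneg (ρ X : M2) (hρ : ρ.PosSemidef) (hX : X.PosSemidef) :
    0 ≤ (ρ * X).trace := by
  obtain ⟨B, rfl⟩ : ∃ B : M2, ρ = Bᴴ * B := by
    open scoped MatrixOrder in exact CStarAlgebra.nonneg_iff_eq_star_mul_self.mp hρ.nonneg
  have h1 : (B * X * Bᴴ).trace = (Bᴴ * B * X).trace := Matrix.trace_mul_cycle B X Bᴴ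
  rw [← h1]
  exact trace_nonneg_of_psd _ (hX.mul_mul_conjTranspose_same B)

/-- The shifted matrix `√k • 1 - Y` is PSD when `Y` is Hermitian with `Y² = k • 1`, `k ≥ 0`. -/
lemma psd_shift (Y : M2) (hY : Y.IsHermitian) (k : ℝ) (hk : 0 ≤ k)
    (hsq : Y * Y = ((k : ℂ)) • 1) :
    (((Real.sqrt k : ℂ)) • (1 : M2) - Y).PosSemidef := by
  set r : ℝ := Real.sqrt k with hr
  have hrnn : 0 ≤ r := Real.sqrt_nonneg k
  have hr2 : (r : ℝ)^2 = k := Real.sq_sqrt hk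
  refine Matrix.PosSemidef.of_dotProduct_mulVec_nonneg ?_ ?_
  · -- Hermitian
    unfold Matrix.IsHermitian
    rw [Matrix.conjTranspose_sub, Matrix.conjTranspose_smul, Matrix.conjTranspose_one, hY.eq]
    congr 1
    simp [Complex.star_def, Complex.conj_ofReal]
  · intro x
    set S : ℂ := dotProduct (star x) x with hS
    set T : ℂ := dotProduct (star x) (Y *ᵥ x) with hT
    have hgoal : dotProduct (star x) ((((r:ℂ)) • (1 : M2) - Y) *ᵥ x)
        = (r:ℂ) * S - T := by
      rw [Matrix.sub_mulVec]
      rw [dotProduct_sub]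
      congr 1
      rw [Matrix.smul_mulVec, Matrix.one_mulVec, dotProduct_smul, smul_eq_mul]
    rw [hgoal]
    -- key : 0 ≤ star z ⬝ᵥ z = 2r(rS - T)
    set z : Fin 2 → ℂ := (r:ℂ) • x - Y *ᵥ x with hz
    have hTalt : dotProduct (star (Y *ᵥ x)) x = T := by
      rw [Matrix.star_mulVec, hY.eq, ← dotProduct_mulVec]
    have hYY : dotProduct (star (Y *ᵥ x)) (Y *ᵥ x) = (k:ℂ) * S := by
      rw [Matrix.star_mulVec, hY.eq, dotProduct_mulVec, Matrix.vecMul_vecMul]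
      have : star x ᵥ* (Y * Y) = (k:ℂ) • star x := by
        rw [hsq]
        funext j
        simp [Matrix.vecMul, dotProduct, Fin.sum_univ_two, Matrix.one_apply,
          Matrix.smul_apply, smul_eq_mul]
        ring
      rw [this, smul_dotProduct, smul_eq_mul]
    have hexp : dotProduct (star z) z = 2 * (r:ℂ) * ((r:ℂ) * S - T) := by
      have hstarz : star z = (r:ℂ) • star x - star (Y *ᵥ x) := by
        rw [hz, star_sub, star_smul]
        congr 1
        simp [Complex.star_def, Complex.conj_ofReal]
      rw [hstarz, hz]
      rw [sub_dotProduct, dotProduct_sub, dotProduct_sub,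
        smul_dotProduct, smul_dotProduct, dotProduct_smul,
        dotProduct_smul, hTalt, hYY]
      simp only [smul_eq_mul, ← hS, ← hT]
      have hrr : (r:ℂ) * (r:ℂ) = (k:ℂ) := by
        rw [← Complex.ofReal_mul]
        norm_cast
        nlinarith [hr2]
      linear_combination (-S) * hrr
    -- now conclude
    rcases eq_or_lt_of_le hrnn with hr0 | hrpos
    · -- r = 0, hence k = 0 and Y x = 0
      have hk0 : k = 0 := by rw [← hr2, ← hr0]; norm_num
      have hz0 : Y *ᵥ x = 0 := by
        apply dotProduct_star_self_eq_zero.mp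
        rw [hYY, hk0]
        simp
      have hT0 : T = 0 := by rw [hT, hz0, dotProduct_zero]
      rw [hT0, ← hr0]
      simp
    · have hznn := dotProduct_star_self_nonneg z
      rw [hexp] at hznn
      rw [Complex.nonneg_iff] at hznn ⊢
      obtain ⟨hre, him⟩ := hznn
      have h2r : (2*(r:ℂ)*((r:ℂ)*S-T)) = (((2*r:ℝ)):ℂ) * ((r:ℂ)*S-T) := by
        push_cast; ring
      rw [h2r] at hre him
      rw [Complex.re_ofReal_mul] at hre
      rw [Complex.im_ofReal_mul] at him
      constructor
      · nlinarith [hre, hrpos]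
      · exact (mul_eq_zero.mp him.symm).resolve_left (by positivity) |>.symm


lemma trace_proj_pair (u v : Fin 2 → ℂ) :
    ((vecMulVec u (star u) : M2) * vecMulVec v (star v)).trace
      = (Complex.normSq (star u ⬝ᵥ v) : ℂ) := by
  rw [vecMulVec_mul_vecMulVec, Matrix.trace_smul, trace_vecMulVec, smul_eq_mul]
  have e : star v ⬝ᵥ u = star (star u ⬝ᵥ v) := by rw [Matrix.star_dotProduct]
  rw [e, Complex.star_def, Complex.mul_conj]

/-- `tr(AB)` in terms of overlaps. -/
lemma trace_obs_mul (a b : Fin 2 → Fin 2 → ℂ) (A B : M2)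
    (hA : A = vecMulVec (a 0) (star (a 0)) - vecMulVec (a 1) (star (a 1)))
    (hB : B = vecMulVec (b 0) (star (b 0)) - vecMulVec (b 1) (star (b 1))) :
    (A*B).trace = (Complex.normSq (star (a 0) ⬝ᵥ b 0) : ℂ)
      - (Complex.normSq (star (a 0) ⬝ᵥ b 1) : ℂ)
      - (Complex.normSq (star (a 1) ⬝ᵥ b 0) : ℂ)
      + (Complex.normSq (star (a 1) ⬝ᵥ b 1) : ℂ) := by
  rw [hA, hB, sub_mul, mul_sub, mul_sub]
  rw [show ∀ X Y Z W : M2, X - Y - (Z - W) = X - Y - Z + W from fun _ _ _ _ => by abel]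
  rw [Matrix.trace_add, Matrix.trace_sub, Matrix.trace_sub,
    trace_proj_pair, trace_proj_pair, trace_proj_pair, trace_proj_pair]

/-- anticommutator is scalar: `AB + BA = tr(AB) • 1`. -/
lemma anticomm_scalar (A B : M2) (hAH : A.trace = 0) (hBH : B.trace = 0)
    (hA2 : A*A = 1) (hB2 : B*B = 1) :
    A*B + B*A = (A*B).trace • (1 : M2) := by
  have h := ch2 (A + B)
  rw [Matrix.trace_add, hAH, hBH, add_zero, zero_smul] at h
  rw [add_mul, mul_add, mul_add, hA2, hB2] at h
  -- h : 1 + A*B + (B*A + 1) = 0 - det • 1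
  have h' : 1 + A*B + (B*A + 1) = -((A+B).det • (1:M2)) := by rw [h, zero_sub]
  have h2 : A*B + B*A = (-(A+B).det - 2) • (1 : M2) := by
    calc A*B + B*A = (1 + A*B + (B*A + 1)) - ((1:M2) + 1) := by abel
    _ = -((A+B).det • (1:M2)) - ((1:M2) + 1) := by rw [h']
    _ = (-(A+B).det - 2) • (1 : M2) := by rw [sub_smul, neg_smul, two_smul]
  have htr : (A*B).trace = (-(A+B).det - 2) := by
    have := congrArg Matrix.trace h2
    rw [Matrix.trace_add, Matrix.trace_smul, Matrix.trace_one, Matrix.trace_mul_comm B A] at this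
    simp only [Fintype.card_fin, Nat.cast_ofNat, smul_eq_mul] at this
    linear_combination this / 2
  rw [h2, htr]

/-- Properties of the observable `A = P₀ - P₁`. -/
lemma obs_props (a : Fin 2 → Fin 2 → ℂ) 
    (ha : ∀ i j, star (a i) ⬝ᵥ a j = if i = j then 1 else 0) (A : M2)
    (hA : A = vecMulVec (a 0) (star (a 0)) - vecMulVec (a 1) (star (a 1))) :
    A.IsHermitian ∧ A * A = 1 ∧ A.trace = 0 := by
  have ha00 : star (a 0) ⬝ᵥ a 0 = 1 := by simpa using ha 0 0
  have ha01 : star (a 0) ⬝ᵥ a 1 = 0 := by simpa using ha 0 1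
  have ha10 : star (a 1) ⬝ᵥ a 0 = 0 := by simpa using ha 1 0
  have ha11 : star (a 1) ⬝ᵥ a 1 = 1 := by simpa using ha 1 1
  refine ⟨?_, ?_, ?_⟩
  · unfold Matrix.IsHermitian
    rw [hA, Matrix.conjTranspose_sub, conjTranspose_vecMulVec, conjTranspose_vecMulVec]
  · rw [hA, sub_mul, mul_sub, mul_sub,
      vecMulVec_mul_vecMulVec, vecMulVec_mul_vecMulVec,
      vecMulVec_mul_vecMulVec, vecMulVec_mul_vecMulVec,
      ha00, ha01, ha10, ha11, one_smul, one_smul, zero_smul, zero_smul]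
    rw [← completeness a ha]
    abel
  · rw [hA, Matrix.trace_sub, trace_vecMulVec, trace_vecMulVec, ha00, ha11, sub_self]

/-- Row/column sums of squared overlaps equal 1. -/
lemma overlap_sum (u : Fin 2 → ℂ) (b : Fin 2 → Fin 2 → ℂ)
    (hbc : vecMulVec (b 0) (star (b 0)) + vecMulVec (b 1) (star (b 1)) = (1 : M2))
    (hu : star u ⬝ᵥ u = 1) :
    (Complex.normSq (star u ⬝ᵥ b 0) : ℂ) + (Complex.normSq (star u ⬝ᵥ b 1) : ℂ) = 1 := by
  have key : star u ⬝ᵥ ((vecMulVec (b 0) (star (b 0))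
      + vecMulVec (b 1) (star (b 1))) *ᵥ u) = 1 := by
    rw [hbc, Matrix.one_mulVec, hu]
  rw [Matrix.add_mulVec, dotProduct_add, vecMulVec_mulVec, vecMulVec_mulVec,
    dotProduct_smul, dotProduct_smul] at key
  have e0 : star (b 0) ⬝ᵥ u = star (star u ⬝ᵥ b 0) := by
    rw [Matrix.star_dotProduct]
  have e1 : star (b 1) ⬝ᵥ u = star (star u ⬝ᵥ b 1) := by
    rw [Matrix.star_dotProduct]
  rw [e0, e1, smul_eq_mul, smul_eq_mul] at key
  rw [← key]
  rw [Complex.star_def, mul_comm ((starRingEnd ℂ) (star u ⬝ᵥ b 0)) _,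
    mul_comm ((starRingEnd ℂ) (star u ⬝ᵥ b 1)) _, Complex.mul_conj, Complex.mul_conj]


/-- Fundamental constraint: `α m_A + β m_B ≤ √(α² + β² + 2αβt)`. -/
lemma key_ineq (ρ A B : M2) (hρ : ρ.PosSemidef) (hρtr : ρ.trace = 1)
    (hAH : A.IsHermitian) (hBH : B.IsHermitian) (hA2 : A*A = 1) (hB2 : B*B = 1)
    (t : ℝ) (hABBA : A*B + B*A = ((2*t : ℝ) : ℂ) • 1) (ht : |t| ≤ 1)
    (mA mB : ℝ) (hmA : (ρ*A).trace = (mA : ℂ)) (hmB : (ρ*B).trace = (mB : ℂ))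
    (α β : ℝ) :
    α*mA + β*mB ≤ Real.sqrt (α^2 + β^2 + 2*α*β*t) := by
  obtain ⟨ht1, ht2⟩ := abs_le.mp ht
  set k : ℝ := α^2 + β^2 + 2*α*β*t with hkdef
  have hk : 0 ≤ k := by
    nlinarith [mul_nonneg (by linarith : (0:ℝ) ≤ 1 - t) (sq_nonneg (α - β)),
      mul_nonneg (by linarith : (0:ℝ) ≤ 1 + t) (sq_nonneg (α + β))]
  set Y : M2 := (α : ℂ) • A + (β : ℂ) • B with hYdef
  have hYH : Y.IsHermitian := by
    unfold Matrix.IsHermitian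
    rw [hYdef, Matrix.conjTranspose_add, Matrix.conjTranspose_smul,
      Matrix.conjTranspose_smul, hAH.eq, hBH.eq]
    simp [Complex.star_def, Complex.conj_ofReal]
  have hY2 : Y * Y = ((k : ℝ) : ℂ) • 1 := by
    have e1 : Y * Y = ((α:ℂ)*(α:ℂ))•(A*A) + ((α:ℂ)*(β:ℂ))•(A*B)
        + ((β:ℂ)*(α:ℂ))•(B*A) + ((β:ℂ)*(β:ℂ))•(B*B) := by
      rw [hYdef, add_mul, mul_add, mul_add, smul_mul_assoc, smul_mul_assoc,
        smul_mul_assoc, smul_mul_assoc, mul_smul_comm, mul_smul_comm,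
        mul_smul_comm, mul_smul_comm, smul_smul, smul_smul, smul_smul, smul_smul]
      abel
    have e3 : A*B = ((2*t : ℝ) : ℂ) • (1:M2) - B*A := by
      rw [← hABBA]; abel
    have hkc : ((k:ℝ):ℂ) = (α:ℂ)*(α:ℂ) + (β:ℂ)*(β:ℂ) + 2*(t:ℂ)*(α:ℂ)*(β:ℂ) := by
      rw [hkdef]; push_cast; ring
    have h2tc : ((2*t : ℝ) : ℂ) = 2*(t:ℂ) := by push_cast; ring
    rw [e1, hA2, hB2, e3, hkc, h2tc]
    module
  have hPSD := psd_shift Y hYH k hk hY2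
  have htr := trace_mul_nonneg ρ _ hρ hPSD
  have hexp : (ρ * (((Real.sqrt k : ℂ)) • (1 : M2) - Y)).trace
      = ((Real.sqrt k - (α*mA + β*mB) : ℝ) : ℂ) := by
    rw [mul_sub, Matrix.trace_sub, mul_smul_comm, Matrix.trace_smul, mul_one, hρtr,
      hYdef, mul_add, Matrix.trace_add, mul_smul_comm, mul_smul_comm,
      Matrix.trace_smul, Matrix.trace_smul, hmA, hmB]
    simp only [smul_eq_mul]
    push_cast
    ring
  rw [hexp] at htr
  have := (Complex.zero_le_real).mp htr
  linarith

end QMU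

open QMU in
set_option maxHeartbeats 1000000 in
/-- Eq. (16): variance-language form of the Maassen–Uffink entropic uncertainty
relation for two qubit observables with eigenvalues `±1`:
`a₊^{a₊} a₋^{a₋} b₊^{b₊} b₋^{b₋} ≤ c_ab²` (real powers, so `0⁰ = 1`). -/
theorem qubit_maassen_uffink_variance_form
    (ρ A B : Matrix (Fin 2) (Fin 2) ℂ)
    (hρ : ρ.PosSemidef) (hρtr : ρ.trace = 1)
    (a b : Fin 2 → Fin 2 → ℂ)
    (ha : ∀ i j, star (a i) ⬝ᵥ a j = if i = j then 1 else 0)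
    (hb : ∀ i j, star (b i) ⬝ᵥ b j = if i = j then 1 else 0)
    (hA : A = vecMulVec (a 0) (star (a 0)) - vecMulVec (a 1) (star (a 1)))
    (hB : B = vecMulVec (b 0) (star (b 0)) - vecMulVec (b 1) (star (b 1)))
    (VA VB : ℝ)
    (hVA : (ρ * (A * A)).trace - ((ρ * A).trace) ^ 2 = (VA : ℂ))
    (hVB : (ρ * (B * B)).trace - ((ρ * B).trace) ^ 2 = (VB : ℂ))
    (cab : ℝ)
    (hcab : cab = max
      (max ‖star (a 0) ⬝ᵥ b 0‖ ‖star (a 0) ⬝ᵥ b 1‖)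
      (max ‖star (a 1) ⬝ᵥ b 0‖ ‖star (a 1) ⬝ᵥ b 1‖)) :
    ((1 + Real.sqrt (1 - VA)) / 2) ^ ((1 + Real.sqrt (1 - VA)) / 2) *
    ((1 - Real.sqrt (1 - VA)) / 2) ^ ((1 - Real.sqrt (1 - VA)) / 2) *
    ((1 + Real.sqrt (1 - VB)) / 2) ^ ((1 + Real.sqrt (1 - VB)) / 2) *
    ((1 - Real.sqrt (1 - VB)) / 2) ^ ((1 - Real.sqrt (1 - VB)) / 2) ≤ cab ^ 2 := by
  obtain ⟨hAH, hA2, hAtr⟩ := obs_props a ha A hA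
  obtain ⟨hBH, hB2, hBtr⟩ := obs_props b hb B hB
  have hca := completeness a ha
  have hcb := completeness b hb
  have ha00 : star (a 0) ⬝ᵥ a 0 = 1 := by simpa using ha 0 0
  have ha11 : star (a 1) ⬝ᵥ a 1 = 1 := by simpa using ha 1 1
  have hb00 : star (b 0) ⬝ᵥ b 0 = 1 := by simpa using hb 0 0
  have hb11 : star (b 1) ⬝ᵥ b 1 = 1 := by simpa using hb 1 1
  -- squared overlaps
  set x : ℝ := Complex.normSq (star (a 0) ⬝ᵥ b 0) with hxdef
  have hrow0 : x + Complex.normSq (star (a 0) ⬝ᵥ b 1) = 1 := by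
    exact_mod_cast overlap_sum (a 0) b hcb ha00
  have hrow1 : Complex.normSq (star (a 1) ⬝ᵥ b 0) + Complex.normSq (star (a 1) ⬝ᵥ b 1) = 1 := by
    exact_mod_cast overlap_sum (a 1) b hcb ha11
  have hcol0 : x + Complex.normSq (star (a 1) ⬝ᵥ b 0) = 1 := by
    have h := overlap_sum (b 0) a hca hb00
    have e0 : Complex.normSq (star (b 0) ⬝ᵥ a 0) = x := by
      rw [Matrix.star_dotProduct, hxdef, Complex.star_def, Complex.normSq_conj]
    have e1 : Complex.normSq (star (b 0) ⬝ᵥ a 1) = Complex.normSq (star (a 1) ⬝ᵥ b 0) := by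
      rw [Matrix.star_dotProduct, Complex.star_def, Complex.normSq_conj]
    rw [e0, e1] at h
    exact_mod_cast h
  have hn01 : Complex.normSq (star (a 0) ⬝ᵥ b 1) = 1 - x := by linarith
  have hn10 : Complex.normSq (star (a 1) ⬝ᵥ b 0) = 1 - x := by linarith
  have hn11 : Complex.normSq (star (a 1) ⬝ᵥ b 1) = x := by linarith
  have hx0 : 0 ≤ x := Complex.normSq_nonneg _
  have hx1 : x ≤ 1 := by
    have := Complex.normSq_nonneg (star (a 0) ⬝ᵥ b 1); linarith
  clear_value x
  set t : ℝ := 2*x - 1 with htdef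
  clear_value t
  have ht : |t| ≤ 1 := abs_le.2 ⟨by simp [htdef]; linarith, by simp [htdef]; linarith⟩
  -- anticommutator
  have htrAB : (A*B).trace = ((2*t : ℝ) : ℂ) := by
    rw [trace_obs_mul a b A B hA hB, hn01, hn10, hn11, ← hxdef, htdef]
    push_cast
    ring
  have hABBA : A*B + B*A = ((2*t:ℝ):ℂ) • 1 := by
    rw [anticomm_scalar A B hAtr hBtr hA2 hB2, htrAB]
  -- real expectation values
  have hmA' : (starRingEnd ℂ) ((ρ*A).trace) = (ρ*A).trace := by
    rw [← Complex.star_def, ← Matrix.trace_conjTranspose, Matrix.conjTranspose_mul,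
      hρ.1.eq, hAH.eq, Matrix.trace_mul_comm]
  have hmB' : (starRingEnd ℂ) ((ρ*B).trace) = (ρ*B).trace := by
    rw [← Complex.star_def, ← Matrix.trace_conjTranspose, Matrix.conjTranspose_mul,
      hρ.1.eq, hBH.eq, Matrix.trace_mul_comm]
  set mA : ℝ := ((ρ*A).trace).re with hmAdef
  set mB : ℝ := ((ρ*B).trace).re with hmBdef
  have hmA : (ρ*A).trace = (mA : ℂ) := (Complex.conj_eq_iff_re.mp hmA').symm
  have hmB : (ρ*B).trace = (mB : ℂ) := (Complex.conj_eq_iff_re.mp hmB').symm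
  clear_value mA mB
  -- variances
  have hVAval : VA = 1 - mA^2 := by
    rw [hA2, mul_one, hρtr, hmA] at hVA
    have : ((1 - mA^2 : ℝ) : ℂ) = ((VA : ℝ) : ℂ) := by push_cast; linear_combination hVA
    exact_mod_cast this.symm
  have hVBval : VB = 1 - mB^2 := by
    rw [hB2, mul_one, hρtr, hmB] at hVB
    have : ((1 - mB^2 : ℝ) : ℂ) = ((VB : ℝ) : ℂ) := by push_cast; linear_combination hVB
    exact_mod_cast this.symm
  have hsA : Real.sqrt (1 - VA) = |mA| := by
    rw [hVAval, show (1:ℝ) - (1 - mA^2) = mA^2 from by ring, Real.sqrt_sq_eq_abs]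
  have hsB : Real.sqrt (1 - VB) = |mB| := by
    rw [hVBval, show (1:ℝ) - (1 - mB^2) = mB^2 from by ring, Real.sqrt_sq_eq_abs]
  -- key inequalities
  have key := fun α β => key_ineq ρ A B hρ hρtr hAH hBH hA2 hB2 t hABBA ht mA mB hmA hmB α β
  have hmA1 : |mA| ≤ 1 := by
    have k1 := key 1 0
    have k2 := key (-1) 0
    have e : (1:ℝ)^2 + 0^2 + 2*1*0*t = 1 := by ring
    have e' : (-1:ℝ)^2 + 0^2 + 2*(-1)*0*t = 1 := by ring
    rw [e, Real.sqrt_one] at k1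
    rw [e', Real.sqrt_one] at k2
    rw [abs_le]
    constructor <;> nlinarith [k1, k2]
  have hmB1 : |mB| ≤ 1 := by
    have k1 := key 0 1
    have k2 := key 0 (-1)
    have e : (0:ℝ)^2 + 1^2 + 2*0*1*t = 1 := by ring
    have e' : (0:ℝ)^2 + (-1)^2 + 2*0*(-1)*t = 1 := by ring
    rw [e, Real.sqrt_one] at k1
    rw [e', Real.sqrt_one] at k2
    rw [abs_le]
    constructor <;> nlinarith [k1, k2]
  have ht2 : t^2 ≤ 1 := by nlinarith [sq_abs t, abs_nonneg t]
  -- the ellipse constraint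
  have hQ : mA^2 + mB^2 - 2*t*mA*mB ≤ 1 - t^2 := by
    have k3 := key (mA - t*mB) (mB - t*mA)
    have e1 : (mA - t*mB)*mA + (mB - t*mA)*mB = mA^2 + mB^2 - 2*t*mA*mB := by ring
    have e2 : (mA - t*mB)^2 + (mB - t*mA)^2 + 2*(mA - t*mB)*(mB - t*mA)*t
        = (1 - t^2)*(mA^2 + mB^2 - 2*t*mA*mB) := by ring
    rw [e1, e2] at k3
    rcases le_or_gt (mA^2 + mB^2 - 2*t*mA*mB) 0 with hq | hq
    · linarith
    · have hv : 0 ≤ (1 - t^2)*(mA^2 + mB^2 - 2*t*mA*mB) := by nlinarith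
      have h2 : (mA^2 + mB^2 - 2*t*mA*mB)^2 ≤ (1-t^2)*(mA^2 + mB^2 - 2*t*mA*mB) := by
        have := pow_le_pow_left₀ hq.le k3 2
        rwa [Real.sq_sqrt hv] at this
      nlinarith
  have hsum : mA^2 + mB^2 ≤ 1 + |t| := by
    rcases eq_or_lt_of_le ht with h1 | h1
    · nlinarith [sq_abs mA, sq_abs mB, abs_nonneg mA, abs_nonneg mB, hmA1, hmB1]
    · have habs : 2*t*mA*mB ≤ |t| * (mA^2 + mB^2) := by
        have h0 : 2*t*mA*mB ≤ |2*t*mA*mB| := le_abs_self _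
        rw [abs_mul, abs_mul, abs_mul, abs_two] at h0
        nlinarith [sq_nonneg (|mA| - |mB|), abs_nonneg t, sq_abs mA, sq_abs mB,
          abs_nonneg mA, abs_nonneg mB]
      have hmul : (1 - |t|) * (mA^2+mB^2) ≤ (1-|t|) * (1+|t|) := by
        have ht2' : |t|^2 = t^2 := sq_abs t
        nlinarith [hQ]
      have h1t : 0 < 1 - |t| := by linarith
      nlinarith [hmul, h1t]
  -- cab
  have hc0sq : (‖star (a 0) ⬝ᵥ b 0‖)^2 = x := by rw [Complex.sq_norm, hxdef]
  have hc1sq : (‖star (a 0) ⬝ᵥ b 1‖)^2 = 1 - x := by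
    rw [Complex.sq_norm]; exact hn01
  have h10 : ‖star (a 1) ⬝ᵥ b 0‖ = ‖star (a 0) ⬝ᵥ b 1‖ := by
    rw [Complex.norm_def, Complex.norm_def, hn10, hn01]
  have h11 : ‖star (a 1) ⬝ᵥ b 1‖ = ‖star (a 0) ⬝ᵥ b 0‖ := by
    rw [Complex.norm_def, Complex.norm_def, hn11, hxdef]
  have hcabmax : cab = max (‖star (a 0) ⬝ᵥ b 0‖) (‖star (a 0) ⬝ᵥ b 1‖) := by
    rw [hcab, h10, h11, max_comm (‖star (a 0) ⬝ᵥ b 1‖) (‖star (a 0) ⬝ᵥ b 0‖),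
      max_self]
  have hcab2 : cab^2 = (1 + |t|)/2 := by
    rcases le_total x (1/2) with hx | hx
    · have hle : ‖star (a 0) ⬝ᵥ b 0‖ ≤ ‖star (a 0) ⬝ᵥ b 1‖ := by
        nlinarith [norm_nonneg (star (a 0) ⬝ᵥ b 0), norm_nonneg (star (a 0) ⬝ᵥ b 1)]
      rw [hcabmax, max_eq_right hle, hc1sq]
      rw [abs_of_nonpos (by rw [htdef]; linarith)]
      rw [htdef]; ring
    · have hle : ‖star (a 0) ⬝ᵥ b 1‖ ≤ ‖star (a 0) ⬝ᵥ b 0‖ := by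
        nlinarith [norm_nonneg (star (a 0) ⬝ᵥ b 0), norm_nonneg (star (a 0) ⬝ᵥ b 1)]
      rw [hcabmax, max_eq_left hle, hc0sq]
      rw [abs_of_nonneg (by rw [htdef]; linarith)]
      rw [htdef]; ring
  -- final chain
  rw [hsA, hsB, hcab2]
  have FA := F_bound (abs_nonneg mA) hmA1
  have FB := F_bound (abs_nonneg mB) hmB1
  rw [sq_abs] at FA
  rw [sq_abs] at FB
  have hL : (0:ℝ) ≤ Real.log 2 := Real.log_nonneg one_le_two
  calc ((1 + |mA|) / 2) ^ ((1 + |mA|) / 2) * ((1 - |mA|) / 2) ^ ((1 - |mA|) / 2) *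
      ((1 + |mB|) / 2) ^ ((1 + |mB|) / 2) * ((1 - |mB|) / 2) ^ ((1 - |mB|) / 2)
      = (((1 + |mA|) / 2) ^ ((1 + |mA|) / 2) * ((1 - |mA|) / 2) ^ ((1 - |mA|) / 2)) *
        (((1 + |mB|) / 2) ^ ((1 + |mB|) / 2) * ((1 - |mB|) / 2) ^ ((1 - |mB|) / 2)) := by
        ring
  _ ≤ Real.exp ((mA^2-1)*Real.log 2) * Real.exp ((mB^2-1)*Real.log 2) := by
      exact mul_le_mul FA FB
        (mul_nonneg (Real.rpow_nonneg (by linarith [abs_nonneg mB]) _)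
          (Real.rpow_nonneg (by linarith [hmB1]) _)) (Real.exp_nonneg _)
  _ = Real.exp ((mA^2 + mB^2 - 2)*Real.log 2) := by
      rw [← Real.exp_add]
      congr 1
      ring
  _ ≤ Real.exp ((|t|-1)*Real.log 2) := by
      apply Real.exp_le_exp.2
      apply mul_le_mul_of_nonneg_right _ hL
      linarith
  _ ≤ (1 + |t|)/2 := chord_exp (abs_nonneg t) ht
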